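/- Let A be a reduced order with inner product ⟨x,y⟩ = ∑_{σ: A→ℂ} σ(x)·conj(σ(y)), graded by an abelian group Γ via (B_γ)_{γ∈Γ}. Then distinct homogeneous components are orthogonal: if γ ≠ δ then ⟨B_γ, B_δ⟩ = 0. -/

import Mathlib

/-- A `Γ`-grading of a commutative ring `A`: a family of additive subgroups
`B γ` with `B γ * B δ ⊆ B (γ*δ)` such that every element of `A` has a unique
finitely-supported decomposition into homogeneous components. -/
def IsGrading {A Γ : Type*} [CommRing A] [CommGroup Γ] (B : Γ → AddSubgroup A) : Prop :=
  (∀ γ δ : Γ, ∀ x ∈ B γ, ∀ y ∈ B δ, x * y ∈ B (γ * δ)) ∧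
  (∀ a : A, ∃! f : Γ →₀ A, (∀ γ, f γ ∈ B γ) ∧ f.sum (fun _ x => x) = a)


/-- The natural inner product on a (reduced) order:
`⟨x, y⟩ = ∑ σ, σ x * conj (σ y)`, where `σ` ranges over all ring homomorphisms
`A → ℂ` (a finite set when `A` is a reduced order); the value is real. -/
noncomputable def ordPairing (A : Type*) [CommRing A] (x y : A) : ℝ :=
  ∑ᶠ σ : A →+* ℂ, (σ x * (starRingEnd ℂ) (σ y)).re

namespace GradingAux

variable {A Γ : Type*} [CommRing A] [CommGroup Γ] {B : Γ → AddSubgroup A}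

/-- The homogeneous decomposition of an element. -/
noncomputable def gcomp (hB : IsGrading B) (a : A) : Γ →₀ A := (hB.2 a).choose

lemma gcomp_mem (hB : IsGrading B) (a : A) (γ : Γ) : gcomp hB a γ ∈ B γ :=
  (hB.2 a).choose_spec.1.1 γ

lemma gcomp_sum (hB : IsGrading B) (a : A) : (gcomp hB a).sum (fun _ x => x) = a :=
  (hB.2 a).choose_spec.1.2

lemma gcomp_eq (hB : IsGrading B) {a : A} {f : Γ →₀ A} (h1 : ∀ γ, f γ ∈ B γ)
    (h2 : f.sum (fun _ x => x) = a) : gcomp hB a = f :=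
  ((hB.2 a).choose_spec.2 f ⟨h1, h2⟩).symm

lemma gcomp_single (hB : IsGrading B) {γ : Γ} {x : A} (hx : x ∈ B γ) :
    gcomp hB x = Finsupp.single γ x := by
  classical
  apply gcomp_eq
  · intro γ'
    rw [Finsupp.single_apply]
    split
    · next h => exact h ▸ hx
    · exact zero_mem _
  · exact Finsupp.sum_single_index rfl

lemma gcomp_zero (hB : IsGrading B) : gcomp hB 0 = 0 := by
  apply gcomp_eq
  · intro γ; exact zero_mem _
  · simp

lemma gcomp_add (hB : IsGrading B) (a b : A) :
    gcomp hB (a + b) = gcomp hB a + gcomp hB b := by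
  apply gcomp_eq
  · intro γ
    rw [Finsupp.add_apply]
    exact add_mem (gcomp_mem hB a γ) (gcomp_mem hB b γ)
  · rw [Finsupp.sum_add_index' (fun _ => rfl) (fun _ _ _ => rfl), gcomp_sum, gcomp_sum]

open Classical in
lemma one_comp_mul (hB : IsGrading B) {δ : Γ} {x : A} (hx : x ∈ B δ) (γ₀ : Γ) :
    gcomp hB 1 γ₀ * x = if γ₀ = 1 then x else 0 := by
  classical
  set f := gcomp hB 1 with hf
  have hg : gcomp hB x = f.sum fun γ e => Finsupp.single (γ * δ) (e * x) := by
    apply gcomp_eq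
    · intro ε
      rw [Finsupp.sum_apply]
      refine sum_mem fun γ hγ => ?_
      show Finsupp.single (γ * δ) (f γ * x) ε ∈ B ε
      rw [Finsupp.single_apply]
      split
      · next h => exact h ▸ hB.1 γ δ _ (gcomp_mem hB 1 γ) x hx
      · exact zero_mem _
    · show (∑ γ ∈ f.support, Finsupp.single (γ * δ) (f γ * x)).sum (fun _ x => x) = x
      rw [← Finsupp.sum_finsetSum_index (fun _ => rfl) (fun _ _ _ => rfl)]
      rw [Finset.sum_congr rfl fun γ _ => Finsupp.sum_single_index rfl]
      rw [← Finset.sum_mul]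
      have h1 : (∑ γ ∈ f.support, f γ) = 1 := gcomp_sum hB 1
      rw [h1, one_mul]
  have hsx : gcomp hB x = Finsupp.single δ x := gcomp_single hB hx
  have hEq := hg.symm.trans hsx
  have hEv := DFunLike.congr_fun hEq (γ₀ * δ)
  rw [Finsupp.sum_apply, Finsupp.single_apply] at hEv
  have hL : (f.sum fun γ e => Finsupp.single (γ * δ) (e * x) (γ₀ * δ)) = f γ₀ * x := by
    rw [Finsupp.sum]
    have : ∀ γ ∈ f.support, Finsupp.single (γ * δ) (f γ * x) (γ₀ * δ)
        = if γ = γ₀ then f γ * x else 0 := by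
      intro γ _
      rw [Finsupp.single_apply, mul_left_inj]
    rw [Finset.sum_congr rfl this, Finset.sum_ite_eq' f.support γ₀ (fun γ => f γ * x)]
    split
    · rfl
    · next h =>
      rw [Finsupp.notMem_support_iff.mp h, zero_mul]
  rw [hL] at hEv
  rw [hEv]
  simp only [right_eq_mul]

open Classical in
lemma one_mem (hB : IsGrading B) [IsReduced A] : (1 : A) ∈ B 1 := by
  classical
  have h0 : ∀ γ₀ : Γ, γ₀ ≠ 1 → gcomp hB 1 γ₀ = 0 := by
    intro γ₀ h
    have := one_comp_mul hB (gcomp_mem hB 1 γ₀) γ₀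
    rw [if_neg h] at this
    have hnil : IsNilpotent (gcomp hB 1 γ₀) := ⟨2, by rwa [pow_two]⟩
    exact hnil.eq_zero
  have hs := gcomp_sum hB 1
  rw [Finsupp.sum] at hs
  have hsub : (gcomp hB 1).support ⊆ {1} := by
    intro γ hγ
    rcases eq_or_ne γ 1 with h | h
    · simp [h]
    · exact absurd (h0 γ h) (Finsupp.mem_support_iff.mp hγ)
  rw [Finset.sum_subset hsub (fun γ _ hγ => Finsupp.notMem_support_iff.mp hγ),
    Finset.sum_singleton] at hs
  rw [← hs]
  exact gcomp_mem hB 1 1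

/-- Additive twist of a ring hom by a character. -/
noncomputable def twistA (hB : IsGrading B) (u : Γ →* ℂˣ) (σ : A →+* ℂ) : A →+ ℂ where
  toFun a := (gcomp hB a).sum fun γ x => (u γ : ℂ) * σ x
  map_zero' := by
    show (gcomp hB (0 : A)).sum (fun γ x => (u γ : ℂ) * σ x) = 0
    rw [gcomp_zero hB, Finsupp.sum_zero_index]
  map_add' a b := by
    show (gcomp hB (a + b)).sum (fun γ x => (u γ : ℂ) * σ x)
      = (gcomp hB a).sum (fun γ x => (u γ : ℂ) * σ x)
        + (gcomp hB b).sum (fun γ x => (u γ : ℂ) * σ x)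
    rw [gcomp_add hB, Finsupp.sum_add_index' (fun γ => by simp)
      (fun γ x y => by rw [map_add, mul_add])]

lemma twistA_apply (hB : IsGrading B) (u : Γ →* ℂˣ) (σ : A →+* ℂ) (a : A) :
    twistA hB u σ a = (gcomp hB a).sum fun γ x => (u γ : ℂ) * σ x := rfl

lemma twistA_of_mem (hB : IsGrading B) (u : Γ →* ℂˣ) (σ : A →+* ℂ) {γ : Γ} {x : A}
    (hx : x ∈ B γ) : twistA hB u σ x = (u γ : ℂ) * σ x := by
  rw [twistA_apply, gcomp_single hB hx, Finsupp.sum_single_index (by simp)]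

/-- Ring hom twist of a ring hom by a character. -/
noncomputable def twistR (hB : IsGrading B) [IsReduced A] (u : Γ →* ℂˣ) (σ : A →+* ℂ) :
    A →+* ℂ :=
  { twistA hB u σ with
    map_one' := by
      show twistA hB u σ 1 = 1
      rw [twistA_of_mem hB u σ (one_mem hB)]
      simp
    map_mul' := fun a b => by
      show twistA hB u σ (a * b) = twistA hB u σ a * twistA hB u σ b
      classical
      set f := gcomp hB a with hfd
      set g := gcomp hB b with hgd
      have hab : a * b = ∑ γ ∈ f.support, ∑ δ ∈ g.support, f γ * g δ := by
        conv_lhs => rw [← gcomp_sum hB a, ← gcomp_sum hB b]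
        rw [Finsupp.sum, Finsupp.sum, Finset.sum_mul_sum]
      rw [hab, map_sum]
      have : ∀ γ ∈ f.support, (twistA hB u σ) (∑ δ ∈ g.support, f γ * g δ)
          = ∑ δ ∈ g.support, ((u γ : ℂ) * σ (f γ)) * ((u δ : ℂ) * σ (g δ)) := by
        intro γ _
        rw [map_sum]
        refine Finset.sum_congr rfl fun δ _ => ?_
        rw [twistA_of_mem hB u σ (hB.1 γ δ _ (gcomp_mem hB a γ) _ (gcomp_mem hB b δ)),
          map_mul u, map_mul σ, Units.val_mul]
        ring
      rw [Finset.sum_congr rfl this, ← Finset.sum_mul_sum]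
      rfl }

lemma twistR_apply (hB : IsGrading B) [IsReduced A] (u : Γ →* ℂˣ) (σ : A →+* ℂ) (a : A) :
    twistR hB u σ a = (gcomp hB a).sum fun γ x => (u γ : ℂ) * σ x := rfl

lemma twistR_of_mem (hB : IsGrading B) [IsReduced A] (u : Γ →* ℂˣ) (σ : A →+* ℂ) {γ : Γ}
    {x : A} (hx : x ∈ B γ) : twistR hB u σ x = (u γ : ℂ) * σ x :=
  twistA_of_mem hB u σ hx

lemma twistR_twistR (hB : IsGrading B) [IsReduced A] (u v : Γ →* ℂˣ) (σ : A →+* ℂ) :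
    twistR hB v (twistR hB u σ) = twistR hB (u * v) σ := by
  ext a
  rw [twistR_apply, twistR_apply]
  apply Finsupp.sum_congr
  intro γ _
  rw [twistR_of_mem hB u σ (gcomp_mem hB a γ)]
  simp only [MonoidHom.mul_apply, Units.val_mul]
  ring

lemma twistR_one (hB : IsGrading B) [IsReduced A] (σ : A →+* ℂ) :
    twistR hB 1 σ = σ := by
  ext a
  rw [twistR_apply]
  conv_rhs => rw [← gcomp_sum hB a]
  rw [Finsupp.sum, Finsupp.sum, map_sum]
  simp

/-- The twist as a bijection of the set of ring homs. -/
noncomputable def twistE (hB : IsGrading B) [IsReduced A] (u : Γ →* ℂˣ) :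
    (A →+* ℂ) ≃ (A →+* ℂ) where
  toFun := twistR hB u
  invFun := twistR hB u⁻¹
  left_inv σ := by
    rw [twistR_twistR, show u * u⁻¹ = 1 by ext g; simp, twistR_one]
  right_inv σ := by
    rw [twistR_twistR, show u⁻¹ * u = 1 by ext g; simp, twistR_one]

lemma finiteHoms (A : Type*) [CommRing A] [Module.Free ℤ A] [Module.Finite ℤ A] :
    Finite (A →+* ℂ) := by
  classical
  let b := Module.Free.chooseBasis ℤ A
  have hmem : ∀ (σ : A →+* ℂ) i, σ (b i) ∈ (minpoly ℤ (b i)).rootSet ℂ := by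
    intro σ i
    have hint : IsIntegral ℤ (b i) := IsIntegral.of_finite ℤ (b i)
    rw [Polynomial.mem_rootSet]
    refine ⟨minpoly.ne_zero hint, ?_⟩
    have h := Polynomial.aeval_algHom_apply σ.toIntAlgHom (b i) (minpoly ℤ (b i))
    rw [minpoly.aeval, map_zero] at h
    simpa using h
  haveI : ∀ i, Finite ((minpoly ℤ (b i)).rootSet ℂ) :=
    fun i => (Polynomial.rootSet_finite _ _).to_subtype
  apply Finite.of_injective
    (fun σ : A →+* ℂ => fun i => (⟨σ (b i), hmem σ i⟩ : (minpoly ℤ (b i)).rootSet ℂ))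
  intro σ τ h
  have hb : ∀ i, σ (b i) = τ (b i) :=
    fun i => congrArg Subtype.val (congrFun h i)
  have hlin : σ.toIntAlgHom.toLinearMap = τ.toIntAlgHom.toLinearMap := Module.Basis.ext b hb
  ext a
  exact DFunLike.congr_fun hlin a

lemma exists_unit_char {Γ : Type*} [CommGroup Γ] {ε : Γ} (hε : ε ≠ 1) :
    ∃ u : Γ →* ℂˣ, (∀ g : Γ, ‖(u g : ℂ)‖ = 1) ∧ ((u ε : ℂ) ≠ 1) := by
  classical
  obtain ⟨χ, hχ⟩ := CharacterModule.exists_character_apply_ne_zero_of_ne_zero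
    (A := Additive Γ) (a := Additive.ofMul ε) (by simpa using hε)
  have hexp : ∀ q r : ℚ, Complex.exp (2 * Real.pi * Complex.I * ((q + r : ℚ) : ℂ))
      = Complex.exp (2 * Real.pi * Complex.I * (q : ℂ))
        * Complex.exp (2 * Real.pi * Complex.I * (r : ℂ)) := by
    intro q r
    rw [← Complex.exp_add]
    congr 1
    push_cast
    ring
  let e₀ : ℚ →+ Additive ℂˣ :=
    { toFun := fun q => Additive.ofMul (Units.mk0 (Complex.exp (2 * Real.pi * Complex.I * q))
        (Complex.exp_ne_zero _))
      map_zero' := by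
        show Additive.ofMul _ = (0 : Additive ℂˣ)
        rw [ofMul_eq_zero]
        ext
        simp
      map_add' := fun q r => by
        show Additive.ofMul _ = Additive.ofMul _ + Additive.ofMul _
        rw [← ofMul_mul]
        congr 1
        ext
        rw [Units.val_mul]
        simp only [Units.val_mk0]
        exact hexp q r }
  have e₀_apply : ∀ q : ℚ, e₀ q = Additive.ofMul (Units.mk0
      (Complex.exp (2 * Real.pi * Complex.I * q)) (Complex.exp_ne_zero _)) := fun _ => rfl
  have hker : ∀ q ∈ AddSubgroup.zmultiples (1 : ℚ), e₀ q = 0 := by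
    intro q hq
    obtain ⟨n, hn⟩ := AddSubgroup.mem_zmultiples_iff.mp hq
    rw [e₀_apply, ofMul_eq_zero]
    ext
    simp only [Units.val_mk0, Units.val_one]
    have h2 : (2 * Real.pi * Complex.I * (q : ℂ)) = (n : ℤ) * (2 * Real.pi * Complex.I) := by
      rw [← hn, zsmul_eq_mul, mul_one]
      push_cast
      ring
    rw [h2, Complex.exp_int_mul_two_pi_mul_I]
  let E : AddCircle (1 : ℚ) →+ Additive ℂˣ := QuotientAddGroup.lift _ e₀ hker
  have E_mk : ∀ q : ℚ, E (q : AddCircle (1 : ℚ)) = e₀ q := fun _ => rfl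
  have hE0 : ∀ c : AddCircle (1 : ℚ), E c = 0 → c = 0 := by
    intro c hc
    obtain ⟨q, rfl⟩ := QuotientAddGroup.mk_surjective c
    rw [E_mk, e₀_apply, ofMul_eq_zero] at hc
    have h1 : Complex.exp (2 * Real.pi * Complex.I * q) = 1 := by
      have := congrArg Units.val hc
      simpa using this
    obtain ⟨n, hn⟩ := Complex.exp_eq_one_iff.mp h1
    have h2 : (2 * Real.pi * Complex.I : ℂ) ≠ 0 := by
      simp [Real.pi_ne_zero, Complex.I_ne_zero]
    have h3 : (q : ℂ) * (2 * Real.pi * Complex.I) = (n : ℂ) * (2 * Real.pi * Complex.I) := by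
      rw [← hn]; ring
    have hq : (q : ℂ) = (n : ℂ) := mul_right_cancel₀ h2 h3
    have hqq : q = (n : ℚ) := by exact_mod_cast hq
    show (q : AddCircle (1 : ℚ)) = 0
    rw [AddCircle.coe_eq_zero_iff]
    exact ⟨n, by rw [hqq]; simp⟩
  have hEabs : ∀ c : AddCircle (1 : ℚ), ‖((E c).toMul : ℂ)‖ = 1 := by
    intro c
    obtain ⟨q, rfl⟩ := QuotientAddGroup.mk_surjective c
    rw [E_mk, e₀_apply]
    rw [toMul_ofMul, Units.val_mk0, Complex.norm_exp]
    have h4 : (2 * Real.pi * Complex.I * q).re = 0 := by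
      have : (2 * Real.pi * Complex.I * (q : ℂ)) = ((2 * Real.pi * q : ℝ) : ℂ) * Complex.I := by
        push_cast; ring
      rw [this]
      simp
    rw [h4, Real.exp_zero]
  refine ⟨{ toFun := fun g => (E (χ (Additive.ofMul g))).toMul
            map_one' := by
              have h5 : χ (Additive.ofMul (1 : Γ)) = 0 := by
                simpa using map_zero χ
              show (E (χ (Additive.ofMul (1 : Γ)))).toMul = 1
              rw [h5, map_zero]
              rfl
            map_mul' := fun g h => by
              show (E (χ (Additive.ofMul (g * h)))).toMul = _
              have h6 : Additive.ofMul (g * h) = Additive.ofMul g + Additive.ofMul h := rfl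
              rw [h6, map_add, map_add]
              rfl }, ?_, ?_⟩
  · intro g
    exact hEabs _
  · intro h
    apply hχ
    apply hE0
    exact toMul_eq_one.mp (Units.ext (by simpa using h))

end GradingAux

/-- In a graded reduced order, distinct homogeneous components are orthogonal
for the natural inner product. -/
theorem grading_components_orthogonal {A Γ : Type*} [CommRing A] [IsReduced A]
    [Module.Free ℤ A] [Module.Finite ℤ A] [CommGroup Γ]
    (B : Γ → AddSubgroup A) (hB : IsGrading B)
    (γ δ : Γ) (hne : γ ≠ δ) :
    ∀ x ∈ B γ, ∀ y ∈ B δ, ordPairing A x y = 0 := by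
  classical
  intro x hx y hy
  haveI : Finite (A →+* ℂ) := GradingAux.finiteHoms A
  haveI := Fintype.ofFinite (A →+* ℂ)
  have hε : γ * δ⁻¹ ≠ 1 := fun h => hne (by rwa [mul_inv_eq_one] at h)
  obtain ⟨u, habs, hune⟩ := GradingAux.exists_unit_char hε
  set c : ℂ := (u γ : ℂ) * (starRingEnd ℂ) (u δ) with hc
  have hδinv : (starRingEnd ℂ) ((u δ : ℂ)) = (((u δ)⁻¹ : ℂˣ) : ℂ) := by
    have hzne : ((u δ : ℂ)) ≠ 0 := (u δ).ne_zero
    have hnsq : Complex.normSq (u δ) = 1 := by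
      rw [← Complex.sq_norm, habs δ, one_pow]
    have h1 : ((u δ : ℂ)) * (starRingEnd ℂ) ((u δ : ℂ)) = 1 := by
      rw [Complex.mul_conj, hnsq, Complex.ofReal_one]
    rw [Units.val_inv_eq_inv_val]
    field_simp
    linear_combination h1
  have hcu : c = ((u (γ * δ⁻¹) : ℂˣ) : ℂ) := by
    rw [hc, hδinv, map_mul, map_inv, Units.val_mul]
  have hc1 : c ≠ 1 := by rw [hcu]; exact hune
  set f : (A →+* ℂ) → ℂ := fun σ => σ x * (starRingEnd ℂ) (σ y) with hfd
  set Z : ℂ := ∑ σ : A →+* ℂ, f σ with hZd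
  have hstep : ∀ σ : A →+* ℂ, f (GradingAux.twistE hB u σ) = c * f σ := by
    intro σ
    have h2 : GradingAux.twistE hB u σ = GradingAux.twistR hB u σ := rfl
    rw [hfd, h2]
    simp only
    rw [GradingAux.twistR_of_mem hB u σ hx, GradingAux.twistR_of_mem hB u σ hy,
      map_mul, hc]
    ring
  have hZc : Z = c * Z := by
    conv_lhs => rw [hZd, ← Equiv.sum_comp (GradingAux.twistE hB u) f]
    rw [Finset.sum_congr rfl fun σ _ => hstep σ, ← Finset.mul_sum, hZd]
  have hZ0 : Z = 0 := by
    have h8 : (1 - c) * Z = 0 := by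
      rw [sub_mul, one_mul, sub_eq_zero]
      exact hZc
    rcases mul_eq_zero.mp h8 with h | h
    · exact absurd (sub_eq_zero.mp h).symm hc1
    · exact h
  show ∑ᶠ σ : A →+* ℂ, (σ x * (starRingEnd ℂ) (σ y)).re = 0
  rw [finsum_eq_sum_of_fintype]
  have h9 : ∑ σ : A →+* ℂ, (σ x * (starRingEnd ℂ) (σ y)).re = Z.re :=
    (Complex.re_sum _ _).symm
  rw [h9, hZ0, Complex.zero_re]
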